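/- Let ζ, ω, θ ∈ ℂ with θ ≠ 0 and set γ = √(ω² − 2θ²ζ) (a square root with γ ≠ 0 and 2γ ≠ (γ−ω)(1−e^{−γs}) for s ∈ [0, T]). Then D(s) = 2ζ(1 − e^{−γ s}) / (2γ − (γ − ω)(1 − e^{−γ s})) solves the Riccati ODE D'(s) = ζ − ω D(s) + ½ θ² D(s)² with initial condition D(0) = 0 on [0, T]. -/

import Mathlib

open Complex

/-- The explicit function `D(s) = 2ζ(1 − e^{−γs}) / (2γ − (γ−ω)(1 − e^{−γs}))` solves
the Riccati ODE `D' = ζ − ωD + ½θ²D²`, `D(0) = 0`, on `[0,T]`, where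
`γ² = ω² − 2θ²ζ`, provided γ ≠ 0 and the denominator does not vanish on `[0,T]`. -/
theorem riccati_explicit_solution (ζ ω θ γ : ℂ) (T : ℝ) (hθ : θ ≠ 0) (hγ : γ ≠ 0)
    (hγsq : γ^2 = ω^2 - 2 * θ^2 * ζ)
    (hden : ∀ s ∈ Set.Icc (0 : ℝ) T,
      2 * γ - (γ - ω) * (1 - Complex.exp (-γ * s)) ≠ 0) :
    let D : ℝ → ℂ := fun s =>
      2 * ζ * (1 - Complex.exp (-γ * s)) / (2 * γ - (γ - ω) * (1 - Complex.exp (-γ * s)))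
    D 0 = 0 ∧
      ∀ s ∈ Set.Icc (0 : ℝ) T,
        HasDerivAt D (ζ - ω * D s + (1/2) * θ^2 * (D s)^2) s := by
  intro D
  constructor
  · simp [D]
  · intro s hs
    have hM := hden s hs
    have hE : HasDerivAt (fun t : ℝ => Complex.exp (-γ * t))
        (-γ * Complex.exp (-γ * s)) s := by
      have h1 : HasDerivAt (fun t : ℝ => -γ * (t : ℂ)) (-γ) s := by
        simpa using (Complex.ofRealCLM.hasDerivAt (x := s)).const_mul (-γ)
      simpa [mul_comm] using h1.cexp
    have hN : HasDerivAt (fun t : ℝ => 2 * ζ * (1 - Complex.exp (-γ * t)))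
        (2 * ζ * (γ * Complex.exp (-γ * s))) s := by
      have := ((hasDerivAt_const s (1:ℂ)).sub hE).const_mul (2 * ζ)
      simpa [mul_comm, mul_assoc, mul_left_comm] using this
    have hMd : HasDerivAt
        (fun t : ℝ => 2 * γ - (γ - ω) * (1 - Complex.exp (-γ * t)))
        (-((γ - ω) * (γ * Complex.exp (-γ * s)))) s := by
      have := ((hasDerivAt_const s (2*γ)).sub
        (((hasDerivAt_const s (1:ℂ)).sub hE).const_mul (γ - ω)))
      simpa [Pi.sub_def, mul_comm, mul_assoc, mul_left_comm] using this
    have hD := hN.div hMd hM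
    convert hD using 1
    · rfl
    · rfl
    simp only [D]
    revert hM
    generalize Complex.exp (-γ * (s:ℂ)) = e
    intro hM
    rw [eq_div_iff (pow_ne_zero 2 hM)]
    have hq := div_mul_cancel₀ (2 * ζ * (1 - e)) hM
    generalize 2 * ζ * (1 - e) / (2 * γ - (γ - ω) * (1 - e)) = q at hq ⊢
    linear_combination (-ω*(2*γ-(γ-ω)*(1-e)) + 1/2*θ^2*(q*(2*γ-(γ-ω)*(1-e)) + 2*ζ*(1-e))) * hq + ζ*(1-e)^2 * hγsq
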